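/- For m ≥ 0 and w ∈ 𝔥, the sum g_m(w) := Σ_{j=0}^{m} f_j(σ_{m-j}(w)) satisfies g_m(xw) = y g_{m-1}(xw) + x g_m(w) and g_m(yw) = y g_m(w) (with g_{-1} = 0). -/

import Mathlib

open scoped BigOperators

abbrev Ltr := Fin 2

/-- `𝔥 = ℚ⟨x,y⟩`, realized as the monoid algebra of the free monoid on two letters. -/
abbrev H := MonoidAlgebra ℚ (FreeMonoid Ltr)

/-- The word `u₁⋯u_m` as an element of `𝔥`. -/
noncomputable def wrd (l : List Ltr) : H := MonoidAlgebra.of ℚ (FreeMonoid Ltr) (FreeMonoid.ofList l)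

/-- The generator `x`. -/
noncomputable def Xh : H := wrd [0]
/-- The generator `y`. -/
noncomputable def Yh : H := wrd [1]

/-- `dn n w = yⁿ ⋄ w` where `⋄` is the bilinear map with `1⋄w = w⋄1 = w`,
`yw₁ ⋄ yw₂ = y(yw₁ ⋄ w₂) - y(w₁ ⋄ xw₂)` and `yw₁ ⋄ xw₂ = x(yw₁ ⋄ w₂) + y(w₁ ⋄ xw₂)`. -/
noncomputable def dn : ℕ → List Ltr → H
  | 0, u => wrd u
  | n + 1, [] => wrd (List.replicate (n + 1) 1)
  | n + 1, a :: u =>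
      if a = 0 then Xh * dn (n + 1) u + Yh * dn n (a :: u)
      else Yh * dn (n + 1) u - Yh * dn n ((0 : Ltr) :: u)
termination_by n u => (n, u.length)

/-- `dia n f = yⁿ ⋄ f`, extended linearly. -/
noncomputable def dia (n : ℕ) (f : H) : H := f.coeff.sum fun u c => c • dn n u.toList

/-- `f_n : 𝔥 → 𝔥` for `n ∈ ℤ`: `f_n = 0` for `n < 0`, `f₀ = id`, and
`f_n(w) = yⁿ ⋄ w - (y^{n-1} ⋄ w)y` for `n ≥ 1`. -/
noncomputable def fZ (n : ℤ) (f : H) : H :=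
  if n < 0 then 0 else if n = 0 then f else dia n.toNat f - dia (n.toNat - 1) f * Yh

abbrev PS := PowerSeries H

/-- The ring homomorphism `σ : 𝔥 → 𝔥[[T]]` with `σ(x) = x` and `σ(y) = y(1-xT)⁻¹`. -/
noncomputable def sigmaH : H →ₐ[ℚ] PS :=
  MonoidAlgebra.lift ℚ PS (FreeMonoid Ltr)
    (FreeMonoid.lift fun a =>
      if a = 0 then PowerSeries.C Xh else PowerSeries.mk fun n => Yh * Xh ^ n)

/-- `σ_m`, the coefficient of `T^m` in `σ`. -/
noncomputable def sigm (m : ℕ) (f : H) : H := PowerSeries.coeff m (sigmaH f)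

/-- The anti-automorphism `τ` with `τ(x) = y`, `τ(y) = x`. -/
noncomputable def tauH (f : H) : H :=
  MonoidAlgebra.ofCoeff (Finsupp.mapDomain
    (fun l => FreeMonoid.ofList
      (((FreeMonoid.toList l).reverse).map fun a => if a = 0 then (1 : Ltr) else 0)) f.coeff)

/-- `g_m(w) = Σ_{j=0}^{m} f_j(σ_{m-j}(w))` for `m ≥ 0`, and `g_m = 0` for `m < 0`. -/
noncomputable def gZ (m : ℤ) (w : H) : H :=
  if m < 0 then 0
  else ∑ j ∈ Finset.range (m.toNat + 1), fZ (j : ℤ) (sigm (m.toNat - j) w)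

lemma dia_zero (n : ℕ) : dia n (0 : H) = 0 := Finsupp.sum_zero_index

lemma dia_add (n : ℕ) (f g : H) : dia n (f + g) = dia n f + dia n g :=
  Finsupp.sum_add_index' (by simp) (by intros; simp [add_smul])

lemma dia_single (n : ℕ) (u : List Ltr) (c : ℚ) :
    dia n (MonoidAlgebra.single (FreeMonoid.ofList u) c) = c • dn n u := by
  simp [dia, Finsupp.sum_single_index]

lemma H_induction (p : H → Prop) (f : H) (h0 : p 0)
    (hadd : ∀ f g : H, p f → p g → p (f + g))
    (hs : ∀ (u : FreeMonoid Ltr) (c : ℚ), p (MonoidAlgebra.single u c)) : p f :=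
  MonoidAlgebra.induction_linear (motive := p) f h0 hadd hs

lemma wrd_cons (a : Ltr) (u : List Ltr) : wrd (a :: u) = wrd [a] * wrd u := by
  simp [wrd, ← map_mul]

lemma Xh_mul_single (u : List Ltr) (c : ℚ) :
    Xh * MonoidAlgebra.single (FreeMonoid.ofList u) c
      = MonoidAlgebra.single (FreeMonoid.ofList ((0:Ltr) :: u)) c := by
  show wrd [0] * _ = _
  rw [show FreeMonoid.ofList ((0:Ltr) :: u) = FreeMonoid.ofList [0] * FreeMonoid.ofList u from rfl]
  simp [wrd, MonoidAlgebra.of_apply, MonoidAlgebra.single_mul_single]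

lemma Yh_mul_single (u : List Ltr) (c : ℚ) :
    Yh * MonoidAlgebra.single (FreeMonoid.ofList u) c
      = MonoidAlgebra.single (FreeMonoid.ofList ((1:Ltr) :: u)) c := by
  show wrd [1] * _ = _
  rw [show FreeMonoid.ofList ((1:Ltr) :: u) = FreeMonoid.ofList [1] * FreeMonoid.ofList u from rfl]
  simp [wrd, MonoidAlgebra.of_apply, MonoidAlgebra.single_mul_single]

lemma dn_x (n : ℕ) (u : List Ltr) :
    dn (n+1) ((0:Ltr) :: u) = Xh * dn (n+1) u + Yh * dn n ((0:Ltr) :: u) := by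
  rw [dn]; simp

lemma dn_y (n : ℕ) (u : List Ltr) :
    dn (n+1) ((1:Ltr) :: u) = Yh * dn (n+1) u - Yh * dn n ((0:Ltr) :: u) := by
  rw [dn]; norm_num

lemma dia_x (n : ℕ) (v : H) :
    dia (n+1) (Xh * v) = Xh * dia (n+1) v + Yh * dia n (Xh * v) := by
  induction v using H_induction with
  | h0 => simp [dia_zero]
  | hadd f g hf hg => simp only [mul_add, dia_add, hf, hg]; abel
  | hs u c =>
      rw [← FreeMonoid.ofList_toList u]
      rw [Xh_mul_single, dia_single, dia_single, dia_single, dn_x]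
      rw [smul_add, mul_smul_comm, mul_smul_comm]

lemma dia_y (n : ℕ) (v : H) :
    dia (n+1) (Yh * v) = Yh * dia (n+1) v - Yh * dia n (Xh * v) := by
  induction v using H_induction with
  | h0 => simp [dia_zero]
  | hadd f g hf hg => simp only [mul_add, dia_add, hf, hg]; abel
  | hs u c =>
      rw [← FreeMonoid.ofList_toList u]
      rw [Yh_mul_single, Xh_mul_single, dia_single, dia_single, dia_single, dn_y]
      rw [smul_sub, mul_smul_comm, mul_smul_comm]
lemma dia_zero' (f : H) : dia 0 f = f := by
  have : ∀ u : FreeMonoid Ltr, ∀ c : ℚ, c • wrd u.toList = MonoidAlgebra.single u c := by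
    intro u c; simp [wrd, MonoidAlgebra.of_apply, Finsupp.smul_single]
  simp only [dia, dn, this]
  exact MonoidAlgebra.sum_coeff_single f

lemma fZ_zero (f : H) : fZ 0 f = f := by simp [fZ]

lemma fZ_succ (j : ℕ) (f : H) : fZ ((j+1:ℕ):ℤ) f = dia (j+1) f - dia j f * Yh := by
  have h1 : ¬ (((j+1:ℕ):ℤ) < 0) := by omega
  have h2 : ((j+1:ℕ):ℤ) ≠ 0 := by omega
  have h3 : ((j+1:ℕ):ℤ).toNat = j+1 := by omega
  simp only [fZ, h1, h2, h3, if_false]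
  simp

lemma fZ_add (n : ℤ) (f g : H) : fZ n (f + g) = fZ n f + fZ n g := by
  unfold fZ; split_ifs <;> simp [dia_add, add_mul] <;> abel

lemma fZ_sum {ι : Type*} (n : ℤ) (s : Finset ι) (f : ι → H) :
    fZ n (∑ i ∈ s, f i) = ∑ i ∈ s, fZ n (f i) :=
  map_sum (AddMonoidHom.mk' (fZ n) (fZ_add n)) f s

lemma fZ_x (j : ℕ) (v : H) :
    fZ ((j+1:ℕ):ℤ) (Xh * v) = Xh * fZ ((j+1:ℕ):ℤ) v + Yh * fZ ((j:ℕ):ℤ) (Xh * v) := by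
  cases j with
  | zero =>
      rw [fZ_succ 0, fZ_succ 0, show ((0:ℕ):ℤ) = 0 from rfl, fZ_zero, dia_x 0,
        dia_zero', dia_zero']
      noncomm_ring
  | succ k =>
      rw [fZ_succ (k+1), fZ_succ (k+1), fZ_succ k, dia_x (k+1), dia_x k]
      noncomm_ring

lemma fZ_y (j : ℕ) (v : H) :
    fZ ((j+1:ℕ):ℤ) (Yh * v) = Yh * fZ ((j+1:ℕ):ℤ) v - Yh * fZ ((j:ℕ):ℤ) (Xh * v) := by
  cases j with
  | zero =>
      rw [fZ_succ 0, fZ_succ 0, show ((0:ℕ):ℤ) = 0 from rfl, fZ_zero, dia_y 0]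
      simp only [dia_zero']
      noncomm_ring
  | succ k =>
      rw [fZ_succ (k+1), fZ_succ (k+1), fZ_succ k, dia_y (k+1), dia_y k, dia_x k]
      noncomm_ring
lemma sigmaH_Xh : sigmaH Xh = PowerSeries.C Xh := by
  simp [sigmaH, Xh, wrd, MonoidAlgebra.lift_of,
    show FreeMonoid.ofList [(0:Ltr)] = FreeMonoid.of 0 from rfl]

lemma sigmaH_Yh : sigmaH Yh = PowerSeries.mk fun n => Yh * Xh ^ n := by
  simp [sigmaH, Yh, wrd, MonoidAlgebra.lift_of,
    show FreeMonoid.ofList [(1:Ltr)] = FreeMonoid.of 1 from rfl]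

lemma sigm_x (m : ℕ) (w : H) : sigm m (Xh * w) = Xh * sigm m w := by
  simp [sigm, map_mul, sigmaH_Xh, PowerSeries.coeff_C_mul]

lemma sigm_y (m : ℕ) (w : H) :
    sigm m (Yh * w) = ∑ k ∈ Finset.range (m+1), Yh * Xh ^ k * sigm (m-k) w := by
  rw [sigm, map_mul, sigmaH_Yh, PowerSeries.coeff_mul,
    Finset.Nat.sum_antidiagonal_eq_sum_range_succ_mk]
  simp [sigm]
noncomputable def hS (m : ℕ) (w : H) : H := ∑ k ∈ Finset.range (m+1), Xh ^ k * sigm (m-k) w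

lemma sigm_y' (m : ℕ) (w : H) : sigm m (Yh * w) = Yh * hS m w := by
  rw [sigm_y, hS, Finset.mul_sum]
  exact Finset.sum_congr rfl fun k _ => by rw [mul_assoc]

lemma hS_zero (w : H) : hS 0 w = sigm 0 w := by simp [hS]

lemma hS_succ (k : ℕ) (w : H) : hS (k+1) w = sigm (k+1) w + Xh * hS k w := by
  rw [hS, Finset.sum_range_succ', hS, Finset.mul_sum]
  simp only [pow_zero, one_mul, Nat.sub_zero, Nat.succ_sub_succ]
  rw [add_comm]
  congr 1
  exact Finset.sum_congr rfl fun i _ => by rw [pow_succ', mul_assoc]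

lemma hS_x (m : ℕ) (w : H) : hS m (Xh * w) = Xh * hS m w := by
  rw [hS, hS, Finset.mul_sum]
  exact Finset.sum_congr rfl fun k _ => by
    rw [sigm_x, ← mul_assoc, ← pow_succ, pow_succ', mul_assoc]

noncomputable def gN (m : ℕ) (w : H) : H :=
  ∑ j ∈ Finset.range (m+1), fZ (j:ℤ) (sigm (m-j) w)

lemma gZ_coe (n : ℕ) (w : H) : gZ (n:ℤ) w = gN n w := by
  have h1 : ¬ ((n:ℤ) < 0) := by omega
  simp [gZ, gN, h1]

lemma gN_zero_x (w : H) : gN 0 (Xh * w) = Xh * gN 0 w := by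
  rw [gN, gN, Finset.sum_range_one, Finset.sum_range_one, show ((0:ℕ):ℤ) = 0 from rfl,
    fZ_zero, fZ_zero, sigm_x]

lemma gN_succ_x (k : ℕ) (w : H) :
    gN (k+1) (Xh * w) = Yh * gN k (Xh * w) + Xh * gN (k+1) w := by
  have e1 : gN (k+1) (Xh*w)
      = ∑ j ∈ Finset.range (k+1), fZ ((j+1:ℕ):ℤ) (Xh * sigm (k-j) w) + Xh * sigm (k+1) w := by
    rw [gN, Finset.sum_range_succ']
    congr 1
    · exact Finset.sum_congr rfl fun j _ => by rw [Nat.succ_sub_succ, sigm_x]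
    · rw [Nat.sub_zero, sigm_x, show ((0:ℕ):ℤ) = 0 from rfl, fZ_zero]
  have e4 : gN (k+1) w
      = ∑ j ∈ Finset.range (k+1), fZ ((j+1:ℕ):ℤ) (sigm (k-j) w) + sigm (k+1) w := by
    rw [gN, Finset.sum_range_succ']
    congr 1
    exact Finset.sum_congr rfl fun j _ => by rw [Nat.succ_sub_succ]
  rw [e1, Finset.sum_congr rfl fun j (_ : j ∈ Finset.range (k+1)) => by
        rw [fZ_x j (sigm (k-j) w), ← sigm_x],
    Finset.sum_add_distrib, ← Finset.mul_sum, ← Finset.mul_sum, e4, gN]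
  rw [mul_add]
  abel

lemma gN_y (m : ℕ) (w : H) : gN m (Yh * w) = Yh * gN m w := by
  have hL : gN m (Yh * w)
      = (∑ j ∈ Finset.range m,
          (Yh * fZ ((j+1:ℕ):ℤ) (hS (m-1-j) w) - Yh * fZ ((j:ℕ):ℤ) (Xh * hS (m-1-j) w)))
        + Yh * hS m w := by
    rw [gN, Finset.sum_range_succ',
      Finset.sum_congr rfl fun j (hj : j ∈ Finset.range m) => by
        rw [show m - (j+1) = m - 1 - j from by omega, sigm_y', fZ_y],
      Nat.sub_zero, sigm_y', show ((0:ℕ):ℤ) = 0 from rfl, fZ_zero]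
  have hA : (∑ j ∈ Finset.range (m+1), fZ ((j:ℕ):ℤ) (hS (m-j) w))
      = (∑ j ∈ Finset.range m, fZ ((j+1:ℕ):ℤ) (hS (m-1-j) w)) + hS m w := by
    rw [Finset.sum_range_succ',
      Finset.sum_congr rfl fun j (hj : j ∈ Finset.range m) => by
        rw [show m - (j+1) = m - 1 - j from by omega],
      Nat.sub_zero, show ((0:ℕ):ℤ) = 0 from rfl, fZ_zero]
  have hA2 : (∑ j ∈ Finset.range (m+1), fZ ((j:ℕ):ℤ) (hS (m-j) w))
      = gN m w + ∑ j ∈ Finset.range m, fZ ((j:ℕ):ℤ) (Xh * hS (m-1-j) w) := by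
    rw [Finset.sum_range_succ, Nat.sub_self, hS_zero,
      Finset.sum_congr rfl fun j (hj : j ∈ Finset.range m) => by
        have hjm : j < m := Finset.mem_range.mp hj
        have h5 : m - j = (m - 1 - j) + 1 := by omega
        rw [h5, hS_succ, fZ_add, ← h5],
      Finset.sum_add_distrib, gN, Finset.sum_range_succ, Nat.sub_self]
    abel
  have key : (∑ j ∈ Finset.range m, fZ ((j+1:ℕ):ℤ) (hS (m-1-j) w)) + hS m w
      = gN m w + ∑ j ∈ Finset.range m, fZ ((j:ℕ):ℤ) (Xh * hS (m-1-j) w) := by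
    rw [← hA, hA2]
  rw [hL, Finset.sum_sub_distrib, ← Finset.mul_sum, ← Finset.mul_sum]
  have : Yh * (∑ j ∈ Finset.range m, fZ ((j+1:ℕ):ℤ) (hS (m-1-j) w)) + Yh * hS m w
      = Yh * gN m w + Yh * ∑ j ∈ Finset.range m, fZ ((j:ℕ):ℤ) (Xh * hS (m-1-j) w) := by
    rw [← mul_add, key, mul_add]
  rw [sub_add_eq_add_sub, this]
  abel
lemma gZ_neg_one (w : H) : gZ (((0:ℕ):ℤ) - 1) w = 0 := by
  rw [gZ, if_pos (by norm_num)]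
/-- For `m ≥ 0` and `w ∈ 𝔥`:
`g_m(xw) = y g_{m-1}(xw) + x g_m(w)` and `g_m(yw) = y g_m(w)` (with `g_{-1} = 0`). -/
theorem stmt10 (m : ℤ) (hm : 0 ≤ m) (w : H) :
    gZ m (Xh * w) = Yh * gZ (m - 1) (Xh * w) + Xh * gZ m w ∧
    gZ m (Yh * w) = Yh * gZ m w := by
  lift m to ℕ using hm with n
  constructor
  · cases n with
    | zero =>
        rw [gZ_coe 0, gZ_coe 0, gZ_neg_one, gN_zero_x, mul_zero, zero_add]
    | succ k =>
        rw [gZ_coe, show ((k+1:ℕ):ℤ) - 1 = ((k:ℕ):ℤ) from by push_cast; ring,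
          gZ_coe, gZ_coe, gN_succ_x]
  · rw [gZ_coe, gZ_coe, gN_y]
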